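/- Let K, L be star bodies in ℝⁿ about the origin (with continuous positive radial functions ρ_K, ρ_L on the unit sphere S^{n-1}), and let φ : [0,∞)² → [0,∞) be continuous, strictly increasing in each variable, with φ(0,0)=0, φ(1,0)=φ(0,1)=1. Then there exists a unique star body K +̃_φ L whose radial function ρ satisfies φ(ρ(u)/ρ_K(u), ρ(u)/ρ_L(u)) = 1 for all u ∈ S^{n-1}; in particular ρ is continuous and positive on S^{n-1}. -/

import Mathlib

/-- The class `Φ̃₂`: continuous on `[0,∞)²`, strictly increasing in each variable,
with `φ(0,0) = 0` and `φ(1,0) = φ(0,1) = 1`. -/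
def IsPhi2 (φ : ℝ → ℝ → ℝ) : Prop :=
  ContinuousOn (fun p : ℝ × ℝ => φ p.1 p.2) (Set.Ici 0 ×ˢ Set.Ici 0) ∧
  (∀ y : ℝ, 0 ≤ y → StrictMonoOn (fun x => φ x y) (Set.Ici 0)) ∧
  (∀ x : ℝ, 0 ≤ x → StrictMonoOn (fun y => φ x y) (Set.Ici 0)) ∧
  φ 0 0 = 0 ∧ φ 1 0 = 1 ∧ φ 0 1 = 1

noncomputable section

open Metric Set MeasureTheory Filter

/-- A star body about the origin in `ℝⁿ`, represented by its radial function,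
which is continuous and positive on the unit sphere. -/
structure StarBody (n : ℕ) where
  ρ : EuclideanSpace ℝ (Fin n) → ℝ
  pos : ∀ u : EuclideanSpace ℝ (Fin n), ‖u‖ = 1 → 0 < ρ u
  cont : ContinuousOn ρ (sphere (0 : EuclideanSpace ℝ (Fin n)) 1)

/-- `M` is the Orlicz `φ`-radial addition `K +̃_φ L`, i.e.
`φ(ρ_M(u)/ρ_K(u), ρ_M(u)/ρ_L(u)) = 1` for all `u` on the unit sphere. -/
def IsOrliczSum {n : ℕ} (φ : ℝ → ℝ → ℝ) (K L M : StarBody n) : Prop :=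
  ∀ u : EuclideanSpace ℝ (Fin n), ‖u‖ = 1 →
    φ (M.ρ u / K.ρ u) (M.ρ u / L.ρ u) = 1

/-- Existence and uniqueness of the Orlicz `φ`-radial addition `K +̃_φ L`. -/
theorem orlicz_radial_sum_exists_unique {n : ℕ} (φ : ℝ → ℝ → ℝ) (hφ : IsPhi2 φ)
    (K L : StarBody n) :
    ∃! ρ : sphere (0 : EuclideanSpace ℝ (Fin n)) 1 → ℝ,
      Continuous ρ ∧ ∀ u : sphere (0 : EuclideanSpace ℝ (Fin n)) 1,
        0 < ρ u ∧ φ (ρ u / K.ρ u) (ρ u / L.ρ u) = 1 := by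
  obtain ⟨hc, hm1, hm2, h00, h10, h01⟩ := hφ
  set S := sphere (0 : EuclideanSpace ℝ (Fin n)) 1 with hS
  have hnorm : ∀ u : S, ‖(u : EuclideanSpace ℝ (Fin n))‖ = 1 := fun u => by
    simpa [hS, mem_sphere_zero_iff_norm] using u.2
  have hK : ∀ u : S, 0 < K.ρ u := fun u => K.pos u (hnorm u)
  have hL : ∀ u : S, 0 < L.ρ u := fun u => L.pos u (hnorm u)
  set g : S → ℝ → ℝ := fun u t => φ (t / K.ρ u) (t / L.ρ u) with hg
  -- strict monotonicity in t
  have gmono : ∀ u : S, StrictMonoOn (g u) (Ici 0) := by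
    intro u s hs t ht hst
    have hs' : (0:ℝ) ≤ s := hs
    have ht' : (0:ℝ) ≤ t := ht
    have h1 : φ (s / K.ρ u) (s / L.ρ u) < φ (t / K.ρ u) (s / L.ρ u) :=
      hm1 (s / L.ρ u) (div_nonneg hs' (hL u).le)
        (div_nonneg hs' (hK u).le) (div_nonneg ht' (hK u).le) (by gcongr; exact hK u)
    have h2 : φ (t / K.ρ u) (s / L.ρ u) < φ (t / K.ρ u) (t / L.ρ u) :=
      hm2 (t / K.ρ u) (div_nonneg ht' (hK u).le)
        (div_nonneg hs' (hL u).le) (div_nonneg ht' (hL u).le) (by gcongr; exact hL u)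
    exact h1.trans h2
  have g0 : ∀ u : S, g u 0 = 0 := by
    intro u; simp [hg, h00]
  -- continuity in t (for fixed u)
  have gcont_t : ∀ u : S, ContinuousOn (g u) (Ici 0) := by
    intro u
    have hmap : MapsTo (fun t : ℝ => (t / K.ρ u, t / L.ρ u)) (Ici 0) (Ici 0 ×ˢ Ici 0) :=
      fun t ht => ⟨div_nonneg ht (hK u).le, div_nonneg ht (hL u).le⟩
    exact hc.comp (((continuous_id.div_const _).prodMk (continuous_id.div_const _)).continuousOn) hmap
  have gK : ∀ u : S, 1 < g u (K.ρ u) := by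
    intro u
    have h1 : K.ρ u / K.ρ u = 1 := div_self (hK u).ne'
    have h2 : 0 < K.ρ u / L.ρ u := div_pos (hK u) (hL u)
    have := hm2 1 zero_le_one (self_mem_Ici) (le_of_lt h2 : (0:ℝ) ≤ _) h2
    simpa [hg, h1, h10] using this
  -- existence of roots
  have hroot : ∀ u : S, ∃ t, 0 < t ∧ g u t = 1 := by
    intro u
    have hmem : (1:ℝ) ∈ Icc (g u 0) (g u (K.ρ u)) :=
      ⟨by rw [g0]; norm_num, (gK u).le⟩
    obtain ⟨t, ht, hte⟩ := intermediate_value_Icc (hK u).le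
      ((gcont_t u).mono (Icc_subset_Ici_self)) hmem
    refine ⟨t, ?_, hte⟩
    rcases ht.1.lt_or_eq with h | h
    · exact h
    · exfalso; rw [← h, g0 u] at hte; norm_num at hte
  choose ρ₀ hρpos hρeq using hroot
  -- continuity of u ↦ g u a for fixed a ≥ 0
  have hKc : Continuous (fun u : S => K.ρ u) := K.cont.restrict
  have hLc : Continuous (fun u : S => L.ρ u) := L.cont.restrict
  have gcont_u : ∀ a : ℝ, 0 ≤ a → Continuous (fun u : S => g u a) := by
    intro a ha
    have h := hc.comp_continuous
      ((continuous_const.div hKc fun u => (hK u).ne').prodMk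
        (continuous_const.div hLc fun u => (hL u).ne'))
      (fun u => ⟨div_nonneg ha (hK u).le, div_nonneg ha (hL u).le⟩)
    simpa [Function.comp_def, hg] using h
  -- key comparison lemmas
  have lt_of_glt : ∀ (u : S) (a : ℝ), 0 ≤ a → g u a < 1 → a < ρ₀ u := by
    intro u a ha hlt
    by_contra h
    push_neg at h
    have := (gmono u).monotoneOn (hρpos u).le ((hρpos u).le.trans h) h
    rw [hρeq u] at this
    exact absurd (this.trans_lt hlt) (lt_irrefl 1)
  have gt_of_ggt : ∀ (u : S) (b : ℝ), 0 ≤ b → 1 < g u b → ρ₀ u < b := by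
    intro u b hb hgt
    by_contra h
    push_neg at h
    have := (gmono u).monotoneOn hb (hρpos u).le h
    rw [hρeq u] at this
    exact absurd (hgt.trans_le this) (lt_irrefl 1)
  -- continuity of ρ₀
  have hcont : Continuous ρ₀ := by
    rw [continuous_iff_continuousAt]
    intro u₀
    rw [ContinuousAt]
    apply tendsto_order.2
    constructor
    · intro a ha
      rcases lt_or_ge a 0 with h | h
      · exact Eventually.of_forall fun u => h.trans (hρpos u)
      · have h1 : g u₀ a < 1 := by
          have := gmono u₀ h (le_trans h ha.le) ha
          rwa [hρeq u₀] at this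
        have : ∀ᶠ u in nhds u₀, g u a < 1 :=
          (gcont_u a h).continuousAt.eventually_lt continuousAt_const h1
        exact this.mono fun u hu => lt_of_glt u a h hu
    · intro b hb
      have hb0 : 0 ≤ b := ((hρpos u₀).trans hb).le
      have h1 : 1 < g u₀ b := by
        have := gmono u₀ (hρpos u₀).le hb0 hb
        rwa [hρeq u₀] at this
      have : ∀ᶠ u in nhds u₀, 1 < g u b :=
        continuousAt_const.eventually_lt (gcont_u b hb0).continuousAt h1
      exact this.mono fun u hu => gt_of_ggt u b hb0 hu
  refine ⟨ρ₀, ⟨hcont, fun u => ⟨hρpos u, hρeq u⟩⟩, ?_⟩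
  rintro ρ' ⟨-, hρ'⟩
  funext u
  exact (gmono u).injOn ((hρ' u).1.le) ((hρpos u).le)
    (((hρ' u).2).trans (hρeq u).symm)
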